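/- arXiv:2302.10359 — 5 statements merged into one kernel-verified Lean document; each statement's English description precedes it below -/
import Mathlib

section
/- Suppose Δ ≥ 1, fix ε ∈ (0,1), a real p ≥ 1, an integer i ≥ 0, and a finite set F ⊆ ℝ^d with |F| = k. Then the number of cells Z of the axis-aligned grid of side length 2^{−i} (the cells 2^{−i}·(z + [0,1)^d) for z ∈ ℤ^d) satisfying inf_{x∈Z} κ(x,F)^p ≤ (5/ε)·(2^{−i+1}·Δ)^p is at most k·(32·Δ/ε)^d. -/
/-- `κ(x, F) = min_{f ∈ F} N (x - f)`. -/
noncomputable def setDist {d : ℕ} (N : Seminorm ℝ (Fin d → ℝ))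
    (x : Fin d → ℝ) (F : Finset (Fin d → ℝ)) : ℝ :=
  sInf {r | ∃ f ∈ F, r = N (x - f)}

/-- The `κ`-diameter `Δ` of the unit cube `[0,1)^d`. -/
noncomputable def cubeDiam {d : ℕ} (N : Seminorm ℝ (Fin d → ℝ)) : ℝ :=
  sSup {r | ∃ x y : Fin d → ℝ, (∀ j, 0 ≤ x j ∧ x j < 1) ∧ (∀ j, 0 ≤ y j ∧ y j < 1) ∧
    r = N (x - y)}

/-- The cell `c·(z + [0,1)^d)` of the axis-aligned grid of side length `c`. -/
def gridCell {d : ℕ} (c : ℝ) (z : Fin d → ℤ) : Set (Fin d → ℝ) :=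
  {x | ∀ j, c * z j ≤ x j ∧ x j < c * (z j + 1)}

lemma coord_le_seminorm {d : ℕ} (N : Seminorm ℝ (Fin d → ℝ))
    (hsign : ∀ σ x : Fin d → ℝ, (∀ j, σ j = 1 ∨ σ j = -1) → N (σ * x) = N x)
    (hbasis : ∀ j, N (Pi.single j 1) = 1)
    (x : Fin d → ℝ) (j : Fin d) : |x j| ≤ N x := by
  have haux : ∀ S : Finset (Fin d), N (fun l => if l ∈ S then 0 else x l) ≤ N x := by
    intro S
    induction S using Finset.induction_on with
    | empty => simp
    | @insert m S hm IH =>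
        set y : Fin d → ℝ := fun l => if l ∈ S then 0 else x l with hy
        set σ : Fin d → ℝ := fun l => if l = m then (-1 : ℝ) else 1 with hσ
        have hσok : ∀ l, σ l = 1 ∨ σ l = -1 := by
          intro l; by_cases h : l = m <;> simp [hσ, h]
        have heq : (fun l => if l ∈ insert m S then 0 else x l)
            = (2⁻¹ : ℝ) • (y + σ * y) := by
          funext l
          by_cases h : l = m
          · subst h; simp [hy, hσ, hm]
          · simp [hy, hσ, h, Finset.mem_insert]
            by_cases h2 : l ∈ S <;> simp [h2] <;> ring
        rw [heq]
        have h1 : N ((2⁻¹ : ℝ) • (y + σ * y)) = 2⁻¹ * N (y + σ * y) := by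
          rw [map_smul_eq_mul]; norm_num
        have h2 : N (y + σ * y) ≤ N y + N (σ * y) := map_add_le_add N _ _
        have h3 : N (σ * y) = N y := hsign σ y hσok
        calc N ((2⁻¹ : ℝ) • (y + σ * y)) = 2⁻¹ * N (y + σ * y) := h1
          _ ≤ 2⁻¹ * (N y + N y) := by rw [h3] at h2; nlinarith [apply_nonneg N (y + σ*y)]
          _ = N y := by ring
          _ ≤ N x := IH
  have hS := haux (Finset.univ.erase j)
  have heq : (fun l => if l ∈ Finset.univ.erase j then 0 else x l) = (x j) • (Pi.single j 1 : Fin d → ℝ) := by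
    funext l
    by_cases h : l = j
    · subst h; simp
    · simp [h, Pi.single_apply]
  rw [heq, map_smul_eq_mul, hbasis j] at hS
  simpa using hS

/-- The number of cells of the grid of side `2^{-i}` whose `κ^p`-distance to a fixed set of
`k` centers is at most `(5/ε)·(2^{-i+1}·Δ)^p` is at most `k·(32Δ/ε)^d`.  Here `κ` is induced
by a sign-invariant normalized norm, and `Δ ≥ 1` is the `κ`-diameter of the unit cube. -/
theorem near_cells_count {d k : ℕ} (hk : 1 ≤ k)
    (N : Seminorm ℝ (Fin d → ℝ)) (hNdef : ∀ x, N x = 0 → x = 0)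
    (hsign : ∀ σ x : Fin d → ℝ, (∀ j, σ j = 1 ∨ σ j = -1) → N (σ * x) = N x)
    (hbasis : ∀ j, N (Pi.single j 1) = 1)
    (Δ : ℝ) (hΔdef : Δ = cubeDiam N) (hΔ : 1 ≤ Δ)
    (ε p : ℝ) (hε0 : 0 < ε) (hε1 : ε < 1) (hp : 1 ≤ p)
    (i : ℕ) (F : Finset (Fin d → ℝ)) (hFcard : F.card = k) :
    {z : Fin d → ℤ |
        sInf {r | ∃ x ∈ gridCell ((2 : ℝ) ^ (-(i : ℤ))) z, r = setDist N x F ^ p}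
          ≤ (5 / ε) * ((2 : ℝ) ^ (-(i : ℤ) + 1) * Δ) ^ p}.Finite ∧
    (Nat.card {z : Fin d → ℤ |
        sInf {r | ∃ x ∈ gridCell ((2 : ℝ) ^ (-(i : ℤ))) z, r = setDist N x F ^ p}
          ≤ (5 / ε) * ((2 : ℝ) ^ (-(i : ℤ) + 1) * Δ) ^ p} : ℝ)
      ≤ k * (32 * Δ / ε) ^ d := by
  have hp0 : (0:ℝ) < p := lt_of_lt_of_le one_pos hp
  have h2c : (2 : ℝ) ^ (-(i : ℤ) + 1) = 2 * (2 : ℝ) ^ (-(i : ℤ)) := by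
    rw [zpow_add₀ (two_ne_zero), zpow_one]; ring
  rw [h2c]
  set c : ℝ := (2 : ℝ) ^ (-(i : ℤ)) with hc
  have hc0 : (0:ℝ) < c := by rw [hc]; positivity
  clear_value c
  set R : ℝ := 12 * c * Δ / ε with hRdef
  have hR0 : 0 < R := by rw [hRdef]; positivity
  clear_value R
  have hΔε : 1 ≤ Δ / ε := by
    rw [le_div_iff₀ hε0]; linarith
  -- the target set
  set T := {z : Fin d → ℤ |
        sInf {r | ∃ x ∈ gridCell c z, r = setDist N x F ^ p}
          ≤ (5 / ε) * (2 * c * Δ) ^ p} with hT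
  clear_value T
  have hFne : F.Nonempty := Finset.card_pos.mp (by omega)
  -- key membership statement
  have hkey : ∀ z ∈ T, ∃ f ∈ F, ∀ j,
      Int.ceil ((f j - R)/c) ≤ z j ∧ z j ≤ Int.floor ((f j + R)/c) := by
    intro z hz
    rw [hT, Set.mem_setOf_eq] at hz
    set B : ℝ := (5 / ε) * (2 * c * Δ) ^ p with hB
    have hB0 : 0 < B := by
      have : (0:ℝ) < (2 * c * Δ) ^ p := Real.rpow_pos_of_pos (by positivity) p
      positivity
    set S := {r | ∃ x ∈ gridCell c z, r = setDist N x F ^ p} with hS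
    -- setDist is nonneg
    have hsd0 : ∀ x : Fin d → ℝ, 0 ≤ setDist N x F := by
      intro x
      apply Real.sInf_nonneg
      rintro r ⟨f, hf, rfl⟩
      exact apply_nonneg N _
    have hSne : S.Nonempty := by
      refine ⟨setDist N (fun j => c * z j) F ^ p, (fun j => c * z j), ?_, rfl⟩
      intro j
      constructor
      · exact le_refl _
      · have : (z j : ℝ) < z j + 1 := by linarith
        exact (mul_lt_mul_iff_right₀ hc0).mpr this
    have hSbdd : BddBelow S := by
      refine ⟨0, ?_⟩
      rintro r ⟨x, hx, rfl⟩
      exact Real.rpow_nonneg (hsd0 x) p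
    have h11 : (1:ℝ) < (11/10 : ℝ) ^ p := by
      rw [Real.one_lt_rpow_iff_of_pos (by norm_num)]
      left; constructor <;> [norm_num; exact hp0]
    have hlt : sInf S < B * (11/10 : ℝ) ^ p :=
      lt_of_le_of_lt hz ((lt_mul_iff_one_lt_right hB0).mpr h11)
    obtain ⟨r, hrS, hrlt⟩ := (csInf_lt_iff hSbdd hSne).mp hlt
    obtain ⟨x, hxcell, rfl⟩ := hrS
    -- the distance is attained
    have hDfin : {r | ∃ f ∈ F, r = N (x - f)}.Finite := by
      have : {r | ∃ f ∈ F, r = N (x - f)} = (fun f => N (x - f)) '' ↑F := by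
        ext r; simp [eq_comm]
      rw [this]; exact (F.finite_toSet).image _
    have hDne : {r | ∃ f ∈ F, r = N (x - f)}.Nonempty := by
      obtain ⟨f, hf⟩ := hFne
      exact ⟨N (x - f), f, hf, rfl⟩
    obtain ⟨f, hfF, hfeq⟩ : ∃ f ∈ F, setDist N x F = N (x - f) :=
      hDne.csInf_mem hDfin
    refine ⟨f, hfF, ?_⟩
    -- extract distance bound
    have hNxf : N (x - f) < 11 * c * Δ / ε := by
      rw [hfeq] at hrlt
      have h0 : (0:ℝ) ≤ N (x - f) := apply_nonneg N _
      have hpow : N (x - f) = (N (x - f) ^ p) ^ (1/p) := by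
        rw [← Real.rpow_mul h0, mul_one_div, div_self hp0.ne', Real.rpow_one]
      have hmono : (N (x - f) ^ p) ^ (1/p) < (B * (11/10 : ℝ) ^ p) ^ (1/p) :=
        Real.rpow_lt_rpow (Real.rpow_nonneg h0 p) hrlt (by positivity)
      have hRHS : (B * (11/10 : ℝ) ^ p) ^ (1/p)
          = ((5/ε) ^ (1/p)) * (2 * c * Δ) * (11/10 : ℝ) := by
        rw [hB, Real.mul_rpow (by positivity) (by positivity),
            Real.mul_rpow (by positivity) (Real.rpow_nonneg (by positivity) p),
            ← Real.rpow_mul (by positivity : (0:ℝ) ≤ 2*c*Δ),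
            ← Real.rpow_mul (by norm_num : (0:ℝ) ≤ 11/10),
            mul_one_div, div_self hp0.ne', Real.rpow_one, Real.rpow_one]
      have h5ε : ((5:ℝ)/ε) ^ (1/p) ≤ 5/ε := by
        have h1 : (1:ℝ) ≤ 5/ε := by
          rw [le_div_iff₀ hε0]; linarith
        calc ((5:ℝ)/ε) ^ (1/p) ≤ (5/ε) ^ (1:ℝ) :=
              Real.rpow_le_rpow_of_exponent_le h1 (by
                rw [div_le_one hp0]; exact hp)
          _ = 5/ε := Real.rpow_one _
      have hfinal : ((5/ε) ^ (1/p)) * (2 * c * Δ) * (11/10 : ℝ) ≤ 11 * c * Δ / ε := by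
        have h2 : (0:ℝ) ≤ 2 * c * Δ * (11/10) := by positivity
        have := mul_le_mul_of_nonneg_right h5ε (by positivity : (0:ℝ) ≤ (2*c*Δ) * (11/10))
        calc ((5/ε) ^ (1/p)) * (2 * c * Δ) * (11/10 : ℝ)
            = ((5/ε) ^ (1/p)) * ((2 * c * Δ) * (11/10)) := by ring
          _ ≤ (5/ε) * ((2 * c * Δ) * (11/10)) := this
          _ = 11 * c * Δ / ε := by ring
      calc N (x - f) = (N (x - f) ^ p) ^ (1/p) := hpow
        _ < (B * (11/10 : ℝ) ^ p) ^ (1/p) := hmono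
        _ = ((5/ε) ^ (1/p)) * (2 * c * Δ) * (11/10 : ℝ) := hRHS
        _ ≤ 11 * c * Δ / ε := hfinal
    intro j
    have hcoord : |x j - f j| ≤ N (x - f) := by
      have := coord_le_seminorm N hsign hbasis (x - f) j
      simpa using this
    have hcell := hxcell j
    have hczx : |c * z j - x j| ≤ c := by
      have hexp : c * ((z j : ℝ) + 1) = c * (z j : ℝ) + c := by ring
      rw [abs_le]
      exact ⟨by linarith [hcell.2, hexp], by linarith [hcell.1, hc0]⟩
    have hcε : c ≤ c * Δ / ε := by
      rw [le_div_iff₀ hε0]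
      nlinarith [mul_le_mul_of_nonneg_left (le_trans hε1.le hΔ) hc0.le]
    have hczf : |c * z j - f j| ≤ R := by
      have habs : |c * z j - f j| ≤ |c * z j - x j| + |x j - f j| := by
        have := abs_sub_abs_le_abs_sub (c * z j - f j) 0
        calc |c * z j - f j| = |(c * z j - x j) + (x j - f j)| := by ring_nf
          _ ≤ |c * z j - x j| + |x j - f j| := abs_add_le _ _
      have h1 : |c * z j - f j| ≤ c + 11 * c * Δ / ε := by
        calc |c * z j - f j| ≤ |c * z j - x j| + |x j - f j| := habs
          _ ≤ c + N (x - f) := add_le_add hczx hcoord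
          _ ≤ c + 11 * c * Δ / ε := by linarith [hNxf.le]
      calc |c * z j - f j| ≤ c + 11 * c * Δ / ε := h1
        _ ≤ c * Δ / ε + 11 * c * Δ / ε := by linarith
        _ = R := by rw [hRdef]; ring
    rw [abs_le] at hczf
    constructor
    · rw [Int.ceil_le, div_le_iff₀ hc0]
      linarith [hczf.1, mul_comm ((z j : ℝ)) c]
    · rw [Int.le_floor, le_div_iff₀ hc0]
      linarith [hczf.2, mul_comm ((z j : ℝ)) c]
  -- the covering finset
  set G : Finset (Fin d → ℤ) := F.biUnion (fun f =>
    Fintype.piFinset fun j => Finset.Icc ⌈(f j - R)/c⌉ ⌊(f j + R)/c⌋) with hG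
  clear_value G
  have hsub : T ⊆ ↑G := by
    intro z hz
    obtain ⟨f, hfF, hbnd⟩ := hkey z hz
    simp only [hG, Finset.coe_biUnion, Set.mem_iUnion, Finset.mem_coe]
    refine ⟨f, hfF, ?_⟩
    rw [Fintype.mem_piFinset]
    intro j
    rw [Finset.mem_Icc]
    exact hbnd j
  have hfin : T.Finite := G.finite_toSet.subset hsub
  refine ⟨hfin, ?_⟩
  -- counting
  have hbound : (0:ℝ) ≤ 32 * Δ / ε := by positivity
  have hfactor : ∀ (f : Fin d → ℝ) (j : Fin d),
      ((Finset.Icc ⌈(f j - R)/c⌉ ⌊(f j + R)/c⌋).card : ℝ) ≤ 32 * Δ / ε := by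
    intro f j
    rw [Int.card_Icc]
    set a := ⌈(f j - R)/c⌉
    set b := ⌊(f j + R)/c⌋
    have h1 : ((b + 1 - a).toNat : ℝ) ≤ max ((b:ℝ) + 1 - a) 0 := by
      rcases le_or_gt (b + 1 - a) 0 with h | h
      · simp [Int.toNat_of_nonpos h]
      · have hkeyc : ((b + 1 - a).toNat : ℝ) = (b:ℝ) + 1 - a := by
          have h2 := Int.toNat_of_nonneg h.le
          have h3 := congrArg (fun m : ℤ => (m : ℝ)) h2
          push_cast at h3
          exact h3
        rw [hkeyc]
        exact le_max_left _ _
    refine h1.trans (max_le ?_ hbound)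
    have hb : (b:ℝ) ≤ (f j + R)/c := Int.floor_le _
    have ha : (f j - R)/c ≤ (a:ℝ) := Int.le_ceil _
    have h2 : (b:ℝ) + 1 - a ≤ (f j + R)/c + 1 - (f j - R)/c := by linarith
    have h3 : (f j + R)/c + 1 - (f j - R)/c = 2 * R / c + 1 := by ring
    have h4 : 2 * R / c + 1 = 24 * Δ / ε + 1 := by
      rw [hRdef]; field_simp; ring
    have h5 : 24 * Δ / ε + 1 ≤ 32 * Δ / ε := by
      have : 1 ≤ 8 * Δ / ε := by
        rw [le_div_iff₀ hε0]; linarith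
      have heq : 32 * Δ / ε = 24 * Δ / ε + 8 * Δ / ε := by ring
      linarith
    linarith
  have hpiF : ∀ f : Fin d → ℝ,
      (((Fintype.piFinset fun j => Finset.Icc ⌈(f j - R)/c⌉ ⌊(f j + R)/c⌋).card : ℕ) : ℝ)
        ≤ (32 * Δ / ε) ^ d := by
    intro f
    rw [Fintype.card_piFinset]
    push_cast
    calc (∏ j, ((Finset.Icc ⌈(f j - R)/c⌉ ⌊(f j + R)/c⌋).card : ℝ))
        ≤ ∏ _j : Fin d, (32 * Δ / ε) :=
          Finset.prod_le_prod (fun j _ => by positivity) (fun j _ => hfactor f j)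
      _ = (32 * Δ / ε) ^ d := by rw [Finset.prod_const]; simp
  have hcard : (Nat.card T : ℝ) ≤ (G.card : ℝ) := by
    have h := Set.ncard_le_ncard hsub G.finite_toSet
    rw [Set.ncard_coe_finset] at h
    rw [Nat.card_coe_set_eq]
    exact_mod_cast h
  have hGcard : (G.card : ℝ) ≤ k * (32 * Δ / ε) ^ d := by
    have h1 : G.card ≤ ∑ f ∈ F,
        (Fintype.piFinset fun j => Finset.Icc ⌈(f j - R)/c⌉ ⌊(f j + R)/c⌋).card := by
      rw [hG]; exact Finset.card_biUnion_le
    have h2 : ((∑ f ∈ F,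
        (Fintype.piFinset fun j => Finset.Icc ⌈(f j - R)/c⌉ ⌊(f j + R)/c⌋).card : ℕ) : ℝ)
        ≤ ∑ _f ∈ F, (32 * Δ / ε) ^ d := by
      push_cast
      exact Finset.sum_le_sum fun f _ => hpiF f
    have h3 : (∑ _f ∈ F, (32 * Δ / ε) ^ d : ℝ) = k * (32 * Δ / ε) ^ d := by
      rw [Finset.sum_const, hFcard]; simp [nsmul_eq_mul]
    calc (G.card : ℝ) ≤ _ := by exact_mod_cast h1
      _ ≤ ∑ _f ∈ F, (32 * Δ / ε) ^ d := h2
      _ = k * (32 * Δ / ε) ^ d := h3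
  exact hcard.trans hGcard
end

section
/- Suppose Δ ≥ 1, fix a real p ≥ 1, an integer i ≥ 0, and a finite set F ⊆ ℝ^d with |F| = k. Then the number of cells Z of the axis-aligned grid of side length 2^{−i} (the cells 2^{−i}·(z + [0,1)^d) for z ∈ ℤ^d) satisfying inf_{x∈Z} κ(x,F) ≤ 2^{−p·i+1} is at most k·(7·Δ)^d. -/
lemma abs_coord_le_seminorm {d : ℕ} (N : Seminorm ℝ (Fin d → ℝ))
    (hsign : ∀ σ x : Fin d → ℝ, (∀ j, σ j = 1 ∨ σ j = -1) → N (σ * x) = N x)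
    (hbasis : ∀ j, N (Pi.single j 1) = 1)
    (y : Fin d → ℝ) (j : Fin d) : |y j| ≤ N y := by
  classical
  set σ : Fin d → ℝ := fun l => if l = j then 1 else -1 with hσdef
  have hσ : ∀ l, σ l = 1 ∨ σ l = -1 := by
    intro l; by_cases h : l = j <;> simp [hσdef, h]
  have key : Pi.single j (y j) = (2 : ℝ)⁻¹ • (y + σ * y) := by
    funext l
    by_cases h : l = j
    · subst h; simp [hσdef]; ring
    · simp [Pi.single_eq_of_ne h, hσdef, h]
  have h1 : N (Pi.single j (y j)) = |y j| := by
    have hs : Pi.single j (y j) = (y j) • (Pi.single j (1 : ℝ) : Fin d → ℝ) := by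
      funext l
      by_cases h : l = j
      · subst h; simp
      · simp [Pi.single_eq_of_ne h]
    rw [hs, map_smul_eq_mul, hbasis, Real.norm_eq_abs, mul_one]
  have h2 : N ((2 : ℝ)⁻¹ • (y + σ * y)) ≤ N y := by
    rw [map_smul_eq_mul]
    have h3 := map_add_le_add N y (σ * y)
    rw [hsign σ y hσ] at h3
    rw [Real.norm_eq_abs, abs_of_pos (by norm_num : (0:ℝ) < 2⁻¹)]
    linarith
  calc |y j| = N (Pi.single j (y j)) := h1.symm
    _ ≤ N y := by rw [key]; exact h2

/-- The number of cells of the grid of side `2^{-i}` whose `κ`-distance to a fixed set of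
`k` centers is at most `2^{-p·i+1}` is at most `k·(7Δ)^d`.  Here `κ` is induced by a
sign-invariant normalized norm, and `Δ ≥ 1` is the `κ`-diameter of the unit cube. -/
theorem close_cells_count {d k : ℕ} (hk : 1 ≤ k)
    (N : Seminorm ℝ (Fin d → ℝ)) (hNdef : ∀ x, N x = 0 → x = 0)
    (hsign : ∀ σ x : Fin d → ℝ, (∀ j, σ j = 1 ∨ σ j = -1) → N (σ * x) = N x)
    (hbasis : ∀ j, N (Pi.single j 1) = 1)
    (Δ : ℝ) (hΔdef : Δ = cubeDiam N) (hΔ : 1 ≤ Δ)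
    (p : ℝ) (hp : 1 ≤ p)
    (i : ℕ) (F : Finset (Fin d → ℝ)) (hFcard : F.card = k) :
    {z : Fin d → ℤ |
        sInf {r | ∃ x ∈ gridCell ((2 : ℝ) ^ (-(i : ℤ))) z, r = setDist N x F}
          ≤ (2 : ℝ) ^ (-p * i + 1)}.Finite ∧
    (Nat.card {z : Fin d → ℤ |
        sInf {r | ∃ x ∈ gridCell ((2 : ℝ) ^ (-(i : ℤ))) z, r = setDist N x F}
          ≤ (2 : ℝ) ^ (-p * i + 1)} : ℝ)
      ≤ k * (7 * Δ) ^ d := by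
  classical
  set c : ℝ := (2 : ℝ) ^ (-(i : ℤ)) with hc
  have hc0 : 0 < c := by positivity
  have hFne : F.Nonempty := Finset.card_pos.mp (by rw [hFcard]; exact hk)
  -- setDist attains its minimum and is a lower bound
  have hsd : ∀ x : Fin d → ℝ, ∃ f ∈ F, setDist N x F = N (x - f) := by
    intro x
    have heq : {r | ∃ f ∈ F, r = N (x - f)} = (fun f => N (x - f)) '' ↑F := by
      ext r; simp [eq_comm]
    have hne : {r | ∃ f ∈ F, r = N (x - f)}.Nonempty := by
      obtain ⟨f, hf⟩ := hFne
      exact ⟨N (x - f), f, hf, rfl⟩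
    have hfin : {r | ∃ f ∈ F, r = N (x - f)}.Finite := by
      rw [heq]; exact F.finite_toSet.image _
    exact hne.csInf_mem hfin
  -- the threshold is at most 2*c
  have hT : (2 : ℝ) ^ (-p * i + 1) ≤ 2 * c := by
    have h1 : (2 : ℝ) ^ (-p * i + 1) ≤ (2 : ℝ) ^ ((-(i : ℝ)) + 1) := by
      apply Real.rpow_le_rpow_of_exponent_le (by norm_num)
      nlinarith [Nat.cast_nonneg (α := ℝ) i]
    have h2 : (2 : ℝ) ^ ((-(i : ℝ)) + 1) = 2 * c := by
      rw [hc]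
      rw [show ((-(i : ℝ)) + 1) = ((-(i : ℤ) + 1 : ℤ) : ℝ) by push_cast; ring,
        Real.rpow_intCast, zpow_add₀ (by norm_num : (2:ℝ) ≠ 0)]
      ring
    linarith
  -- the covering finset
  set G : Finset (Fin d → ℤ) :=
    F.biUnion (fun f => Fintype.piFinset fun j =>
      Finset.Icc (⌊f j / c⌋ - 3) (⌊f j / c⌋ + 3)) with hG
  have hsub : {z : Fin d → ℤ |
        sInf {r | ∃ x ∈ gridCell c z, r = setDist N x F}
          ≤ (2 : ℝ) ^ (-p * i + 1)} ⊆ ↑G := by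
    intro z hz
    simp only [Set.mem_setOf_eq] at hz
    have hSne : {r | ∃ x ∈ gridCell c z, r = setDist N x F}.Nonempty := by
      refine ⟨setDist N (fun j => c * z j) F, fun j => c * z j, ?_, rfl⟩
      intro j
      constructor
      · exact le_refl _
      · have : c * (z j : ℝ) < c * ((z j : ℝ) + 1) := by nlinarith
        simpa using this
    have hlt : sInf {r | ∃ x ∈ gridCell c z, r = setDist N x F}
        < (2 : ℝ) ^ (-p * i + 1) + c := by
      linarith
    obtain ⟨r, ⟨x, hxcell, hrx⟩, hr⟩ := exists_lt_of_csInf_lt hSne hlt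
    obtain ⟨f, hfF, hfeq⟩ := hsd x
    have hNxf : N (x - f) < 3 * c := by
      rw [hrx, hfeq] at hr
      linarith
    have hcoord : ∀ j, |x j - f j| < 3 * c := by
      intro j
      have := abs_coord_le_seminorm N hsign hbasis (x - f) j
      simp only [Pi.sub_apply] at this
      linarith
    simp only [hG, Finset.coe_biUnion, Set.mem_iUnion, Finset.mem_coe]
    refine ⟨f, hfF, ?_⟩
    rw [Fintype.mem_piFinset]
    intro j
    rw [Finset.mem_Icc]
    have hcell := hxcell j
    have habs := hcoord j
    have hxl : f j - 3 * c < x j := by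
      have := abs_lt.mp habs; linarith [this.1]
    have hxu : x j < f j + 3 * c := by
      have := abs_lt.mp habs; linarith [this.2]
    constructor
    · -- floor(f j / c) - 3 ≤ z j
      have h4 : f j / c < (z j : ℝ) + 4 := by
        rw [div_lt_iff₀ hc0]
        nlinarith [hcell.2]
      have : ⌊f j / c⌋ < z j + 4 := by
        rw [Int.floor_lt]; push_cast; exact h4
      omega
    · -- z j ≤ floor(f j / c) + 3
      have h4 : ((z j : ℝ) - 3) ≤ f j / c := by
        rw [le_div_iff₀ hc0]
        nlinarith [hcell.1]
      have : (z j - 3 : ℤ) ≤ ⌊f j / c⌋ := by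
        rw [Int.le_floor]; push_cast; exact h4
      omega
  have hfin : {z : Fin d → ℤ |
        sInf {r | ∃ x ∈ gridCell c z, r = setDist N x F}
          ≤ (2 : ℝ) ^ (-p * i + 1)}.Finite := G.finite_toSet.subset hsub
  refine ⟨hfin, ?_⟩
  have hGcard : G.card ≤ k * 7 ^ d := by
    calc G.card ≤ ∑ f ∈ F, (Fintype.piFinset fun j =>
          Finset.Icc (⌊f j / c⌋ - 3) (⌊f j / c⌋ + 3)).card := Finset.card_biUnion_le
      _ = ∑ f ∈ F, 7 ^ d := by
          apply Finset.sum_congr rfl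
          intro f _
          rw [Fintype.card_piFinset]
          have hcard : ∀ j, (Finset.Icc (⌊f j / c⌋ - 3) (⌊f j / c⌋ + 3)).card = 7 := by
            intro j; rw [Int.card_Icc]; omega
          simp [hcard, Finset.prod_const]
      _ = k * 7 ^ d := by rw [Finset.sum_const, hFcard, smul_eq_mul]
  have hcount : (Nat.card {z : Fin d → ℤ |
        sInf {r | ∃ x ∈ gridCell c z, r = setDist N x F}
          ≤ (2 : ℝ) ^ (-p * i + 1)}) ≤ k * 7 ^ d := by
    calc Nat.card {z : Fin d → ℤ |
          sInf {r | ∃ x ∈ gridCell c z, r = setDist N x F}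
            ≤ (2 : ℝ) ^ (-p * i + 1)}
        = ({z : Fin d → ℤ |
          sInf {r | ∃ x ∈ gridCell c z, r = setDist N x F}
            ≤ (2 : ℝ) ^ (-p * i + 1)}).ncard := Nat.card_coe_set_eq _
      _ ≤ (↑G : Set (Fin d → ℤ)).ncard := Set.ncard_le_ncard hsub G.finite_toSet
      _ = G.card := Set.ncard_coe_finset G
      _ ≤ k * 7 ^ d := hGcard
  calc (Nat.card {z : Fin d → ℤ |
        sInf {r | ∃ x ∈ gridCell c z, r = setDist N x F}
          ≤ (2 : ℝ) ^ (-p * i + 1)} : ℝ)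
      ≤ ((k * 7 ^ d : ℕ) : ℝ) := by exact_mod_cast hcount
    _ = (k : ℝ) * 7 ^ d := by push_cast; ring
    _ ≤ k * (7 * Δ) ^ d := by
        have h7 : (7:ℝ) ^ d ≤ (7 * Δ) ^ d :=
          pow_le_pow_left₀ (by norm_num) (by nlinarith) d
        have hk0 : (0:ℝ) ≤ k := Nat.cast_nonneg k
        nlinarith [pow_nonneg (by norm_num : (0:ℝ) ≤ 7) d]
end

section
/- Let x₁,…,xₙ ∈ B_d ⊆ ℝ^d (Euclidean ball of diameter 1), fix an integer k ≥ 1, a real p ≥ 1, and ε ∈ (0, 1/4), and let π : ℝ^d → ℝ^m be a map with π(xᵢ) ∈ B_m for every i. Suppose that for every finite sequence y₁,…,y_N with each yⱼ ∈ {x₁,…,xₙ} and every k-partition 𝒞 of y₁,…,y_N, the uniform-weight sample partition costs satisfy (1+ε)^{−1}·ĉost(𝒞) ≤ ĉost(π(𝒞)) ≤ (1+ε)·ĉost(𝒞). Then for every vector w of nonnegative weights summing to 1 and every k-partition 𝒞 of x₁,…,xₙ, (1+ε)^{−3}·ĉost(𝒞,w) ≤ ĉost(π(𝒞),w) ≤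 (1+ε)³·ĉost(𝒞,w). -/
/-- The weighted sample `(k,p)`-partition cost of points `y₁, …, yₙ` labelled by
`ℓ : Fin n → Fin k`, with weights `w` and centers ranging over the ball of diameter 1:
`ĉost(𝒞, w) = inf_{u⁽¹⁾,…,u⁽ᵏ⁾ ∈ B} Σᵢ wᵢ ‖yᵢ - u^{(ℓ i)}‖₂^p`. -/
noncomputable def sampleCost {E : Type*} [NormedAddCommGroup E] {n k : ℕ}
    (p : ℝ) (y : Fin n → E) (ℓ : Fin n → Fin k) (w : Fin n → ℝ) : ℝ :=
  ⨅ u : Fin k → (Metric.closedBall (0 : E) (1 / 2)),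
    ∑ i, w i * ‖y i - (u (ℓ i) : E)‖ ^ p

section Aux

variable {E : Type*} [NormedAddCommGroup E] {n k : ℕ}

lemma ballNonempty : Nonempty (Metric.closedBall (0 : E) (1 / 2)) :=
  ⟨⟨0, Metric.mem_closedBall_self (by norm_num)⟩⟩

lemma sampleCost_nonneg (p : ℝ) (y : Fin n → E) (ℓ : Fin n → Fin k) (w : Fin n → ℝ)
    (hw : ∀ i, 0 ≤ w i) : 0 ≤ sampleCost p y ℓ w := by
  haveI := ballNonempty (E := E)
  exact le_ciInf fun u => Finset.sum_nonneg fun i _ =>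
    mul_nonneg (hw i) (Real.rpow_nonneg (norm_nonneg _) p)

lemma sampleCost_le_sum (p : ℝ) (y : Fin n → E) (ℓ : Fin n → Fin k) (w : Fin n → ℝ)
    (hw : ∀ i, 0 ≤ w i) (u : Fin k → (Metric.closedBall (0 : E) (1 / 2))) :
    sampleCost p y ℓ w ≤ ∑ i, w i * ‖y i - (u (ℓ i) : E)‖ ^ p :=
  ciInf_le ⟨0, by
    rintro r ⟨u', rfl⟩
    exact Finset.sum_nonneg fun i _ =>
      mul_nonneg (hw i) (Real.rpow_nonneg (norm_nonneg _) p)⟩ u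

/-- One-sided Lipschitz continuity of the sample cost in the weights. -/
lemma sampleCost_le_add (p : ℝ) (hp : 0 ≤ p) (y : Fin n → E)
    (hy : ∀ i, y i ∈ Metric.closedBall (0 : E) (1 / 2)) (ℓ : Fin n → Fin k)
    (w v : Fin n → ℝ) (hw : ∀ i, 0 ≤ w i) (hv : ∀ i, 0 ≤ v i) {D : ℝ}
    (hD : ∑ i, |w i - v i| ≤ D) :
    sampleCost p y ℓ w ≤ sampleCost p y ℓ v + D := by
  haveI := ballNonempty (E := E)
  have key : ∀ u : Fin k → (Metric.closedBall (0 : E) (1 / 2)),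
      sampleCost p y ℓ w - D ≤ ∑ i, v i * ‖y i - (u (ℓ i) : E)‖ ^ p := by
    intro u
    have h1 := sampleCost_le_sum p y ℓ w hw u
    have h2 : ∑ i, w i * ‖y i - (u (ℓ i) : E)‖ ^ p
        ≤ ∑ i, v i * ‖y i - (u (ℓ i) : E)‖ ^ p + ∑ i, |w i - v i| := by
      rw [← Finset.sum_add_distrib]
      refine Finset.sum_le_sum fun i _ => ?_
      have ht0 : (0 : ℝ) ≤ ‖y i - (u (ℓ i) : E)‖ ^ p :=
        Real.rpow_nonneg (norm_nonneg _) p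
      have ht1 : ‖y i - (u (ℓ i) : E)‖ ^ p ≤ 1 := by
        refine Real.rpow_le_one (norm_nonneg _) ?_ hp
        have h1 := Metric.mem_closedBall.mp (hy i)
        have h2 := Metric.mem_closedBall.mp (u (ℓ i)).2
        simp only [dist_zero_right] at h1 h2
        calc ‖y i - (u (ℓ i) : E)‖ ≤ ‖y i‖ + ‖(u (ℓ i) : E)‖ := norm_sub_le _ _
          _ ≤ 1 := by linarith
      have habs : (w i - v i) * ‖y i - (u (ℓ i) : E)‖ ^ p ≤ |w i - v i| := by
        calc (w i - v i) * ‖y i - (u (ℓ i) : E)‖ ^ p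
            ≤ |w i - v i| * ‖y i - (u (ℓ i) : E)‖ ^ p :=
              mul_le_mul_of_nonneg_right (le_abs_self _) ht0
          _ ≤ |w i - v i| * 1 := mul_le_mul_of_nonneg_left ht1 (abs_nonneg _)
          _ = |w i - v i| := mul_one _
      nlinarith [habs]
    linarith
  have := le_ciInf key
  have h3 : sampleCost p y ℓ w - D ≤ sampleCost p y ℓ v := this
  linarith

/-- Replicating point `i` exactly `N i` times with uniform weights realizes the
rational weights `N i / ∑ N`. -/
lemma sampleCost_replicate (p : ℝ) (y : Fin n → E) (ℓ : Fin n → Fin k) (N : Fin n → ℕ)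
    (e : (Σ i, Fin (N i)) ≃ Fin (∑ i, N i)) :
    sampleCost p (fun j => y ((e.symm j).1)) (fun j => ℓ ((e.symm j).1))
        (fun _ => ((∑ i, N i : ℕ) : ℝ)⁻¹)
      = sampleCost p y ℓ (fun i => (N i : ℝ) / ((∑ i, N i : ℕ) : ℝ)) := by
  unfold sampleCost
  refine iInf_congr fun u => ?_
  have h1 : ∑ j, (fun s : Σ i, Fin (N i) =>
        ((∑ i, N i : ℕ) : ℝ)⁻¹ * ‖y s.1 - (u (ℓ s.1) : E)‖ ^ p) (e.symm j)
      = ∑ s : Σ i, Fin (N i), ((∑ i, N i : ℕ) : ℝ)⁻¹ * ‖y s.1 - (u (ℓ s.1) : E)‖ ^ p :=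
    Equiv.sum_comp e.symm (fun s : Σ i, Fin (N i) =>
      ((∑ i, N i : ℕ) : ℝ)⁻¹ * ‖y s.1 - (u (ℓ s.1) : E)‖ ^ p)
  calc ∑ j, ((∑ i, N i : ℕ) : ℝ)⁻¹ * ‖y ((e.symm j).1) - (u (ℓ ((e.symm j).1)) : E)‖ ^ p
      = ∑ s : Σ i, Fin (N i), ((∑ i, N i : ℕ) : ℝ)⁻¹ * ‖y s.1 - (u (ℓ s.1) : E)‖ ^ p := h1
    _ = ∑ i, (N i : ℝ) * (((∑ i, N i : ℕ) : ℝ)⁻¹ * ‖y i - (u (ℓ i) : E)‖ ^ p) := by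
        rw [← Finset.univ_sigma_univ, Finset.sum_sigma]
        simp [mul_comm]
    _ = ∑ i, (N i : ℝ) / ((∑ i, N i : ℕ) : ℝ) * ‖y i - (u (ℓ i) : E)‖ ^ p := by
        refine Finset.sum_congr rfl fun i _ => ?_
        ring

end Aux

set_option maxHeartbeats 1000000 in
/-- If a dimension-reduction map `π` preserves (up to `1 ± ε` factors) the uniform-weight
sample partition costs of every finite sequence drawn from the points `x₁, …, xₙ ∈ B_d`,
then it preserves weighted sample partition costs up to `(1+ε)^{±3}` factors. -/
theorem dimension_reduction_weighted_partition_costs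
    {d m n k : ℕ} (hk : 1 ≤ k)
    (p : ℝ) (hp : 1 ≤ p) (ε : ℝ) (hε0 : 0 < ε) (hε : ε < 1 / 4)
    (x : Fin n → EuclideanSpace ℝ (Fin d))
    (hx : ∀ i, x i ∈ Metric.closedBall (0 : EuclideanSpace ℝ (Fin d)) (1 / 2))
    (π : EuclideanSpace ℝ (Fin d) → EuclideanSpace ℝ (Fin m))
    (hπ : ∀ i, π (x i) ∈ Metric.closedBall (0 : EuclideanSpace ℝ (Fin m)) (1 / 2))
    (hpres : ∀ (M : ℕ) (y : Fin M → EuclideanSpace ℝ (Fin d)),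
      (∀ j, ∃ i, y j = x i) → ∀ ℓ : Fin M → Fin k,
        (1 + ε)⁻¹ * sampleCost p y ℓ (fun _ => (M : ℝ)⁻¹)
            ≤ sampleCost p (fun j => π (y j)) ℓ (fun _ => (M : ℝ)⁻¹) ∧
        sampleCost p (fun j => π (y j)) ℓ (fun _ => (M : ℝ)⁻¹)
            ≤ (1 + ε) * sampleCost p y ℓ (fun _ => (M : ℝ)⁻¹)) :
    ∀ w : Fin n → ℝ, (∀ i, 0 ≤ w i) → (∑ i, w i) = 1 →
      ∀ ℓ : Fin n → Fin k,
        ((1 + ε) ^ 3)⁻¹ * sampleCost p x ℓ w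
            ≤ sampleCost p (fun i => π (x i)) ℓ w ∧
        sampleCost p (fun i => π (x i)) ℓ w ≤ (1 + ε) ^ 3 * sampleCost p x ℓ w := by
  intro w hw hsum ℓ
  have hp0 : (0 : ℝ) ≤ p := le_trans zero_le_one hp
  have hε1 : (0 : ℝ) < 1 + ε := by linarith
  have hn : 0 < n := by
    rcases n.eq_zero_or_pos with h | h
    · subst h; simp at hsum
    · exact h
  set Cx := sampleCost p x ℓ w with hCx
  set Cπ := sampleCost p (fun i => π (x i)) ℓ w with hCπ
  have hCx0 : 0 ≤ Cx := sampleCost_nonneg p x ℓ w hw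
  have hCπ0 : 0 ≤ Cπ := sampleCost_nonneg p _ ℓ w hw
  have key : ∀ δ : ℝ, 0 < δ → Cπ ≤ (1 + ε) * Cx + δ ∧ Cx ≤ (1 + ε) * Cπ + δ := by
    intro δ hδ
    set δ' : ℝ := δ / 3 with hδ'def
    have hδ' : 0 < δ' := by positivity
    obtain ⟨M, hM⟩ := exists_nat_gt (2 * n / δ')
    have hM0 : 0 < (M : ℝ) := lt_of_le_of_lt (by positivity) hM
    have h2nM : 2 * (n : ℝ) / M ≤ δ' := by
      rw [div_le_iff₀ hM0]
      have := (div_lt_iff₀ hδ').mp hM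
      nlinarith
    set N : Fin n → ℕ := fun i => ⌈(M : ℝ) * w i⌉₊ with hN
    set S : ℕ := ∑ i, N i with hS
    have hScast : (S : ℝ) = ∑ i, (N i : ℝ) := by rw [hS]; push_cast; rfl
    have hle : ∀ i, (M : ℝ) * w i ≤ N i := fun i => Nat.le_ceil _
    have hlt : ∀ i, (N i : ℝ) ≤ M * w i + 1 := fun i =>
      le_of_lt (Nat.ceil_lt_add_one (mul_nonneg hM0.le (hw i)))
    have hMS : (M : ℝ) ≤ S := by
      have hMe : (M : ℝ) = ∑ i, (M : ℝ) * w i := by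
        rw [← Finset.mul_sum, hsum, mul_one]
      rw [hMe, hScast]
      exact Finset.sum_le_sum fun i _ => hle i
    have hS0 : 0 < (S : ℝ) := lt_of_lt_of_le hM0 hMS
    have hSM : (S : ℝ) ≤ M + n := by
      rw [hScast]
      calc ∑ i, (N i : ℝ) ≤ ∑ i, ((M : ℝ) * w i + 1) := Finset.sum_le_sum fun i _ => hlt i
        _ = M + n := by
          rw [Finset.sum_add_distrib, ← Finset.mul_sum, hsum, mul_one]
          simp
    set v : Fin n → ℝ := fun i => (N i : ℝ) / ((S : ℕ) : ℝ) with hv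
    have hv0 : ∀ i, 0 ≤ v i := fun i => div_nonneg (Nat.cast_nonneg _) (le_of_lt hS0)
    have habs : ∑ i, |w i - v i| ≤ δ' := by
      have per : ∀ i, |w i - v i| ≤ ((N i : ℝ) / M - w i) + ((N i : ℝ) / M - (N i : ℝ) / S) := by
        intro i
        have h1 : w i ≤ (N i : ℝ) / M := (le_div_iff₀ hM0).mpr (by linarith [hle i])
        have h2 : (N i : ℝ) / S ≤ (N i : ℝ) / M :=
          div_le_div_of_nonneg_left (Nat.cast_nonneg _) hM0 hMS
        rw [hv]
        exact abs_le.mpr ⟨by linarith, by linarith⟩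
      calc ∑ i, |w i - v i|
          ≤ ∑ i, (((N i : ℝ) / M - w i) + ((N i : ℝ) / M - (N i : ℝ) / S)) :=
            Finset.sum_le_sum fun i _ => per i
        _ = 2 * ((S : ℝ) / M) - 1 - (S : ℝ) / S := by
            rw [Finset.sum_add_distrib, Finset.sum_sub_distrib, Finset.sum_sub_distrib,
              ← Finset.sum_div, ← Finset.sum_div, ← hScast, hsum]
            ring
        _ ≤ δ' := by
            rw [div_self (ne_of_gt hS0)]
            have h4 : (S : ℝ) / M ≤ ((M : ℝ) + n) / M := by
              gcongr
            have h5 : ((M : ℝ) + n) / M = 1 + n / M := by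
              rw [add_div, div_self (ne_of_gt hM0)]
            have h6 : 2 * ((n : ℝ) / M) = 2 * n / M := by ring
            linarith [h2nM]
    have habs' : ∑ i, |v i - w i| ≤ δ' := by
      have : ∀ i, |v i - w i| = |w i - v i| := fun i => abs_sub_comm _ _
      simp only [this]; exact habs
    -- replicated sequence
    have hcard : Fintype.card (Σ i, Fin (N i)) = S := by simp [hS]
    set e : (Σ i, Fin (N i)) ≃ Fin (∑ i, N i) :=
      Fintype.equivFinOfCardEq (by simp [hS]) with he
    have hrep_x := sampleCost_replicate p x ℓ N e
    have hrep_π := sampleCost_replicate p (fun i => π (x i)) ℓ N e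
    obtain ⟨hlow, hhigh⟩ := hpres (∑ i, N i) (fun j => x ((e.symm j).1))
      (fun j => ⟨(e.symm j).1, rfl⟩) (fun j => ℓ ((e.symm j).1))
    rw [hrep_x] at hlow hhigh
    rw [hrep_π] at hlow hhigh
    -- hhigh : sampleCost π-pts with weights v ≤ (1+ε) * sampleCost x-pts with weights v
    have hvv : (fun i => (N i : ℝ) / ((∑ i, N i : ℕ) : ℝ)) = v := by
      funext i; rw [hv, hS]
    rw [hvv] at hlow hhigh
    have hxlow : sampleCost p x ℓ v ≤ (1 + ε) * sampleCost p (fun i => π (x i)) ℓ v := by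
      have := mul_le_mul_of_nonneg_left hlow (le_of_lt hε1)
      rwa [← mul_assoc, mul_inv_cancel₀ (ne_of_gt hε1), one_mul] at this
    have l1 : Cπ ≤ sampleCost p (fun i => π (x i)) ℓ v + δ' :=
      sampleCost_le_add p hp0 _ hπ ℓ w v hw hv0 habs
    have l2 : sampleCost p x ℓ v ≤ Cx + δ' :=
      sampleCost_le_add p hp0 _ hx ℓ v w hv0 hw habs'
    have l3 : sampleCost p (fun i => π (x i)) ℓ v ≤ sampleCost p (fun i => π (x i)) ℓ w + δ' :=
      sampleCost_le_add p hp0 _ hπ ℓ v w hv0 hw habs'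
    have l4 : Cx ≤ sampleCost p x ℓ v + δ' :=
      sampleCost_le_add p hp0 _ hx ℓ w v hw hv0 habs
    constructor
    · have : Cπ ≤ (1 + ε) * (Cx + δ') + δ' := by
        calc Cπ ≤ sampleCost p (fun i => π (x i)) ℓ v + δ' := l1
          _ ≤ (1 + ε) * sampleCost p x ℓ v + δ' := by linarith [hhigh]
          _ ≤ (1 + ε) * (Cx + δ') + δ' := by
              have := mul_le_mul_of_nonneg_left l2 (le_of_lt hε1)
              linarith
      nlinarith [hδ]
    · have : Cx ≤ (1 + ε) * (Cπ + δ') + δ' := by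
        calc Cx ≤ sampleCost p x ℓ v + δ' := l4
          _ ≤ (1 + ε) * sampleCost p (fun i => π (x i)) ℓ v + δ' := by linarith [hxlow]
          _ ≤ (1 + ε) * (Cπ + δ') + δ' := by
              have := mul_le_mul_of_nonneg_left l3 (le_of_lt hε1)
              linarith
      nlinarith [hδ]
  have A : Cπ ≤ (1 + ε) * Cx := le_of_forall_pos_le_add fun δ hδ => (key δ hδ).1
  have B : Cx ≤ (1 + ε) * Cπ := le_of_forall_pos_le_add fun δ hδ => (key δ hδ).2
  have hcube : (1 + ε) ≤ (1 + ε) ^ 3 := by nlinarith [hε0.le, sq_nonneg ε]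
  constructor
  · have h1 : ((1 + ε) ^ 3)⁻¹ * Cx ≤ (1 + ε)⁻¹ * Cx := by
      refine mul_le_mul_of_nonneg_right ?_ hCx0
      exact inv_anti₀ hε1 hcube
    have h2 : (1 + ε)⁻¹ * Cx ≤ Cπ := by
      rw [inv_mul_le_iff₀ hε1]; exact B
    linarith
  · calc Cπ ≤ (1 + ε) * Cx := A
      _ ≤ (1 + ε) ^ 3 * Cx := mul_le_mul_of_nonneg_right hcube hCx0
end

section
/- Let X ⊆ ℝ^d, c > 0, r ≥ 0, and let F* ⊆ ℝ^d be a finite set with |F*| = k such that sup_{x∈X} κ(x, F*) ≤ r. Then the number of cells of the axis-aligned grid of side c (the cells c·(z + [0,1)^d) for z ∈ ℤ^d) that intersect X is at most k·(1 + 2Δ + 2r/c)^d. -/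
lemma seminorm_sum_le {d : ℕ} (N : Seminorm ℝ (Fin d → ℝ)) {ι : Type*} (s : Finset ι)
    (g : ι → Fin d → ℝ) : N (∑ j ∈ s, g j) ≤ ∑ j ∈ s, N (g j) := by
  classical
  refine Finset.induction_on s (by simp) ?_
  intro a s' hj ih
  rw [Finset.sum_insert hj, Finset.sum_insert hj]
  exact le_trans (map_add_le_add N _ _) (by linarith)

/-- If every point of `X` is within `κ`-distance `r` of a set `F*` of `k` centers, then the
number of cells of the axis-aligned grid of side `c` that intersect `X` is at most
`k·(1 + 2Δ + 2r/c)^d`.  Here `κ` is induced by a sign-invariant normalized norm and `Δ` is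
the `κ`-diameter of the unit cube. -/
theorem grid_cells_intersecting_clusters_count {d k : ℕ} (hk : 1 ≤ k)
    (N : Seminorm ℝ (Fin d → ℝ)) (hNdef : ∀ x, N x = 0 → x = 0)
    (hsign : ∀ σ x : Fin d → ℝ, (∀ j, σ j = 1 ∨ σ j = -1) → N (σ * x) = N x)
    (hbasis : ∀ j, N (Pi.single j 1) = 1)
    (Δ : ℝ) (hΔdef : Δ = cubeDiam N)
    (X : Set (Fin d → ℝ)) (c r : ℝ) (hc : 0 < c) (hr : 0 ≤ r)
    (Fstar : Finset (Fin d → ℝ)) (hFstarCard : Fstar.card = k)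
    (hFstar : ∀ x ∈ X, setDist N x Fstar ≤ r) :
    {z : Fin d → ℤ | (gridCell c z ∩ X).Nonempty}.Finite ∧
    (Nat.card {z : Fin d → ℤ | (gridCell c z ∩ X).Nonempty} : ℝ)
      ≤ k * (1 + 2 * Δ + 2 * r / c) ^ d := by
  classical
  -- norm of single
  have hsingle_norm : ∀ (a : ℝ) (j : Fin d), N (Pi.single j a) = |a| := by
    intro a j
    have h : (Pi.single j a : Fin d → ℝ) = a • (Pi.single j 1 : Fin d → ℝ) := by
      funext i
      by_cases h : i = j <;> simp [h, Pi.single_apply]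
    rw [h, map_smul_eq_mul, hbasis j, Real.norm_eq_abs, mul_one]
  -- coordinate bound
  have hcoord : ∀ (u : Fin d → ℝ) (j : Fin d), |u j| ≤ N u := by
    intro u j
    set u' : Fin d → ℝ := fun i => if i = j then u i else -(u i) with hu'
    have hNu' : N u' = N u := by
      have h1 : (fun i => if i = j then (1:ℝ) else -1) * u = u' := by
        funext i; by_cases h : i = j <;> simp [hu', h]
      rw [← h1]
      exact hsign _ u (by intro i; by_cases h : i = j <;> simp [h])
    have h2 : (Pi.single j (u j) : Fin d → ℝ) = (2⁻¹ : ℝ) • (u + u') := by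
      funext i
      by_cases h : i = j <;> simp [Pi.single_apply, h, hu'] <;> ring
    calc |u j| = N (Pi.single j (u j)) := (hsingle_norm _ _).symm
      _ = 2⁻¹ * N (u + u') := by
          rw [h2, map_smul_eq_mul]; norm_num
      _ ≤ 2⁻¹ * (N u + N u') :=
          mul_le_mul_of_nonneg_left (map_add_le_add N u u') (by norm_num)
      _ = N u := by rw [hNu']; ring
  -- sum bound
  have hsum : ∀ v : Fin d → ℝ, N v ≤ ∑ j, |v j| := by
    intro v
    calc N v = N (∑ j, Pi.single j (v j)) := by rw [Finset.univ_sum_single]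
      _ ≤ ∑ j, N (Pi.single j (v j)) := seminorm_sum_le N _ _
      _ = ∑ j, |v j| := by simp [hsingle_norm]
  -- Δ ≥ 1 whenever d ≥ 1
  have hΔge : ∀ _ : Fin d, (1:ℝ) ≤ Δ := by
    intro j
    have hbdd : BddAbove {s | ∃ x y : Fin d → ℝ, (∀ j, 0 ≤ x j ∧ x j < 1) ∧
        (∀ j, 0 ≤ y j ∧ y j < 1) ∧ s = N (x - y)} := by
      refine ⟨d, ?_⟩
      rintro t ⟨x, y, hx, hy, rfl⟩
      calc N (x - y) ≤ ∑ i, |x i - y i| := by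
            have := hsum (x - y); simpa using this
        _ ≤ ∑ _i : Fin d, (1:ℝ) := by
            refine Finset.sum_le_sum fun i _ => ?_
            have h1 := hx i; have h2 := hy i
            rw [abs_le]; constructor <;> linarith [h1.1, h1.2, h2.1, h2.2]
        _ = d := by simp
    have hmem : ∀ t : ℝ, 0 ≤ t → t < 1 → t ≤ Δ := by
      intro t ht0 ht1
      rw [hΔdef, cubeDiam]
      refine le_csSup hbdd ⟨Pi.single j t, 0, ?_, by simp, ?_⟩
      · intro i; by_cases h : i = j <;> simp [Pi.single_apply, h, ht0, ht1]
      · rw [sub_zero, hsingle_norm]; exact (abs_of_nonneg ht0).symm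
    by_contra hcon
    push_neg at hcon
    have h0 : (0:ℝ) ≤ Δ := hmem 0 le_rfl one_pos
    have := hmem ((Δ + 1) / 2) (by linarith) (by linarith)
    linarith
  -- extract a near center
  have hFne : Fstar.Nonempty := Finset.card_pos.mp (by omega)
  have hnear : ∀ x ∈ X, ∃ f ∈ Fstar, N (x - f) ≤ r := by
    intro x hx
    have hset : {s | ∃ f ∈ Fstar, s = N (x - f)} = (fun f => N (x - f)) '' ↑Fstar := by
      ext s; simp [eq_comm]
    have hfin : {s | ∃ f ∈ Fstar, s = N (x - f)}.Finite := by
      rw [hset]; exact Fstar.finite_toSet.image _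
    have hne : {s | ∃ f ∈ Fstar, s = N (x - f)}.Nonempty := by
      obtain ⟨f, hf⟩ := hFne; exact ⟨N (x - f), f, hf, rfl⟩
    obtain ⟨f, hf, heq⟩ := hne.csInf_mem hfin
    have hd := hFstar x hx
    unfold setDist at hd
    exact ⟨f, hf, by rw [← heq]; exact hd⟩
  set B : ℝ := 1 + 2 * Δ + 2 * r / c with hB
  set box : (Fin d → ℝ) → Finset (Fin d → ℤ) := fun f =>
    Fintype.piFinset (fun j => Finset.Icc ⌈(f j - r - c) / c⌉ ⌊(f j + r) / c⌋) with hbox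
  have hsub : {z : Fin d → ℤ | (gridCell c z ∩ X).Nonempty} ⊆ ↑(Fstar.biUnion box) := by
    rintro z ⟨x, hxc, hxX⟩
    obtain ⟨f, hf, hfx⟩ := hnear x hxX
    refine Finset.mem_coe.mpr (Finset.mem_biUnion.mpr ⟨f, hf, ?_⟩)
    rw [hbox]
    rw [Fintype.mem_piFinset]
    intro j
    have hx1 := (hxc j).1
    have hx2 := (hxc j).2
    have hfj : |x j - f j| ≤ r := by
      have := hcoord (x - f) j
      simp only [Pi.sub_apply] at this
      exact le_trans this hfx
    rw [abs_le] at hfj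
    rw [Finset.mem_Icc]
    constructor
    · rw [Int.ceil_le, div_le_iff₀ hc]
      nlinarith [hfj.1, hx2]
    · rw [Int.le_floor, le_div_iff₀ hc]
      nlinarith [hfj.2, hx1]
  have hfinS : {z : Fin d → ℤ | (gridCell c z ∩ X).Nonempty}.Finite :=
    Set.Finite.subset (Fstar.biUnion box).finite_toSet hsub
  refine ⟨hfinS, ?_⟩
  have hboxcard : ∀ f : Fin d → ℝ, ((box f).card : ℝ) ≤ B ^ d := by
    intro f
    rw [hbox]
    simp only [Fintype.card_piFinset]
    push_cast
    calc (∏ j, ((Finset.Icc ⌈(f j - r - c) / c⌉ ⌊(f j + r) / c⌋).card : ℝ))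
        ≤ ∏ _j : Fin d, B := by
          refine Finset.prod_le_prod (fun j _ => by positivity) (fun j _ => ?_)
          have h1 : (1:ℝ) ≤ Δ := hΔge j
          have hrc : (0:ℝ) ≤ 2 * r / c := by positivity
          have hab : (f j + r) / c - (f j - r - c) / c = 2 * r / c + 1 := by
            field_simp
            ring
          set a : ℝ := (f j - r - c) / c with ha
          set b : ℝ := (f j + r) / c with hbdef
          rcases le_or_gt ⌈a⌉ ⌊b⌋ with hmn | hmn
          · rw [Int.card_Icc]
            have hcast : (((⌊b⌋ + 1 - ⌈a⌉).toNat : ℕ) : ℝ) = ((⌊b⌋:ℝ) + 1 - (⌈a⌉:ℝ)) := by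
              have h0 : ((⌊b⌋ + 1 - ⌈a⌉).toNat : ℤ) = ⌊b⌋ + 1 - ⌈a⌉ :=
                Int.toNat_of_nonneg (by omega)
              exact_mod_cast congrArg (Int.cast : ℤ → ℝ) h0
            rw [hcast]
            have hm := Int.le_ceil a
            have hn := Int.floor_le b
            rw [hB]
            rw [ha, hbdef] at hab
            linarith
          · rw [Int.card_Icc]
            have hz : ⌊b⌋ + 1 - ⌈a⌉ ≤ 0 := by omega
            rw [Int.toNat_of_nonpos hz]
            rw [hB]; norm_num; linarith
      _ = B ^ d := by rw [Finset.prod_const]; simp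
  have hcardS : (Nat.card {z : Fin d → ℤ | (gridCell c z ∩ X).Nonempty} : ℝ)
      ≤ ((Fstar.biUnion box).card : ℝ) := by
    rw [Nat.card_coe_set_eq]
    have h := Set.ncard_le_ncard hsub (Fstar.biUnion box).finite_toSet
    rw [Set.ncard_coe_finset] at h
    exact_mod_cast h
  calc (Nat.card {z : Fin d → ℤ | (gridCell c z ∩ X).Nonempty} : ℝ)
      ≤ ((Fstar.biUnion box).card : ℝ) := hcardS
    _ ≤ ∑ f ∈ Fstar, ((box f).card : ℝ) := by exact_mod_cast Finset.card_biUnion_le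
    _ ≤ ∑ _f ∈ Fstar, B ^ d := Finset.sum_le_sum fun f _ => hboxcard f
    _ = k * B ^ d := by rw [Finset.sum_const, hFstarCard, nsmul_eq_mul]
end

section
/- Let P be a probability distribution and F* a finite set of k centers. Suppose that with probability at least q ∈ (0,1], a batch of n i.i.d. samples from P contains, for every f ∈ F*, at least one point whose nearest center in F* is f. Then for every integer m ≥ 1 and every δ ∈ (0,1), drawing ⌈(1 + ln(1/δ))·m/q⌉ independent batches of n i.i.d. samples each — i.e., O((n·m/q)·log(1/δ)) samples in total — yields, with probability at least 1 − δ, at least m sample points from each cluster of F*. -/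
set_option maxHeartbeats 1000000
open MeasureTheory
open scoped ENNReal
open Finset in
private lemma chernoff_real (q pr L : ℝ) (T m : ℕ) (hq0 : 0 < q) (hq1 : q ≤ 1)
    (hqpr : q ≤ pr) (hpr1 : pr ≤ 1) (hL : 0 < L) (hm : 1 ≤ m)
    (hmu : (1 + L) * m ≤ q * T) :
    ∑ j ∈ Finset.range m, (T.choose j : ℝ) * (pr ^ j * (1 - pr) ^ (T - j))
      ≤ Real.exp (-L) := by
  have hpr0 : 0 ≤ pr := le_of_lt (lt_of_lt_of_le hq0 hqpr)
  have h1pr : 0 ≤ 1 - pr := by linarith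
  set x : ℝ := q * T with hx
  have hm1 : (1:ℝ) ≤ m := by exact_mod_cast hm
  have hmx : (m:ℝ) ≤ x := by nlinarith
  have hx0 : 0 < x := by nlinarith
  set k : ℕ := m - 1 with hk
  have hmk : m = k + 1 := (Nat.succ_pred_eq_of_pos hm).symm
  set kr : ℝ := max (k:ℝ) 1 with hkr
  have hkr1 : (1:ℝ) ≤ kr := le_max_right _ _
  have hkrm : kr ≤ m := by
    apply max_le _ hm1
    have : (k:ℝ) ≤ m := by exact_mod_cast Nat.sub_le m 1
    exact this
  have hkrx : kr ≤ x := le_trans hkrm hmx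
  set s : ℝ := kr / x with hs
  have hs0 : 0 < s := div_pos (by linarith) hx0
  have hs1 : s ≤ 1 := (div_le_one hx0).mpr hkrx
  have hmT : m ≤ T := by
    have : (m:ℝ) ≤ T := by nlinarith [Nat.cast_nonneg (α := ℝ) T]
    exact_mod_cast this
  -- Step A
  have stepA : s ^ k * ∑ j ∈ Finset.range m, (T.choose j : ℝ) * (pr ^ j * (1 - pr) ^ (T - j))
      ≤ (s * pr + (1 - pr)) ^ T := by
    rw [Finset.mul_sum]
    calc ∑ j ∈ range m, s ^ k * ((T.choose j : ℝ) * (pr ^ j * (1 - pr) ^ (T - j)))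
        ≤ ∑ j ∈ range m, (s * pr) ^ j * (1 - pr) ^ (T - j) * (T.choose j : ℝ) := by
          apply Finset.sum_le_sum
          intro j hj
          have hjk : j ≤ k := by
            have := Finset.mem_range.mp hj
            omega
          have hsk : s ^ k ≤ s ^ j := pow_le_pow_of_le_one hs0.le hs1 hjk
          have hnn : (0:ℝ) ≤ (T.choose j : ℝ) * (pr ^ j * (1 - pr) ^ (T - j)) := by positivity
          calc s ^ k * ((T.choose j : ℝ) * (pr ^ j * (1 - pr) ^ (T - j)))
              ≤ s ^ j * ((T.choose j : ℝ) * (pr ^ j * (1 - pr) ^ (T - j))) := by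
                apply mul_le_mul_of_nonneg_right hsk hnn
            _ = (s * pr) ^ j * (1 - pr) ^ (T - j) * (T.choose j : ℝ) := by
                rw [mul_pow]; ring
      _ ≤ ∑ j ∈ range (T+1), (s * pr) ^ j * (1 - pr) ^ (T - j) * (T.choose j : ℝ) := by
          apply Finset.sum_le_sum_of_subset_of_nonneg
          · exact Finset.range_subset_range.mpr (by omega)
          · intro j _ _; positivity
      _ = (s * pr + (1 - pr)) ^ T := (add_pow _ _ T).symm
  -- Step B
  have stepB : (s * pr + (1 - pr)) ^ T ≤ Real.exp (-(x - kr)) := by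
    have hbase0 : 0 ≤ s * pr + (1 - pr) := by positivity
    have hbase : s * pr + (1 - pr) ≤ Real.exp (-(q * (1 - s))) := by
      have h1 : s * pr + (1 - pr) ≤ 1 - q * (1 - s) := by nlinarith
      have h2 : -(q * (1 - s)) + 1 ≤ Real.exp (-(q * (1 - s))) := Real.add_one_le_exp _
      linarith
    calc (s * pr + (1 - pr)) ^ T ≤ Real.exp (-(q * (1 - s))) ^ T :=
          pow_le_pow_left₀ hbase0 hbase T
      _ = Real.exp ((T:ℝ) * (-(q * (1 - s)))) := (Real.exp_nat_mul _ T).symm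
      _ = Real.exp (-(x - kr)) := by
          congr 1
          have hxs : x * s = kr := by rw [hs]; field_simp
          nlinarith [hxs]
  -- key inequality
  have key : (k:ℝ) * Real.log (x / kr) + kr + L ≤ x := by
    rcases Nat.eq_zero_or_pos k with hk0 | hk1
    · have hkr_eq : kr = 1 := by
        rw [hkr, hk0]; simp
      have hm_eq : (m:ℝ) = 1 := by rw [hmk, hk0]; norm_num
      rw [hk0, hkr_eq]
      have h1L : (1 + L) * (m:ℝ) ≤ x := hmu
      rw [hm_eq] at h1L
      push_cast
      linarith
    · have hk0R : (0:ℝ) < k := by exact_mod_cast hk1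
      have hkr_eq : kr = k := max_eq_left (by exact_mod_cast hk1)
      set M : ℝ := (1 + L) * ((k:ℝ) + 1) with hM
      have hMx : M ≤ x := by
        have : ((m:ℕ):ℝ) = (k:ℝ) + 1 := by rw [hmk]; push_cast; ring
        rw [hM, ← this]; exact hmu
      have hM0 : 0 < M := by positivity
      have hkM : (k:ℝ) ≤ M := by nlinarith
      have l1 : (k:ℝ) * Real.log (x / M) ≤ x - M := by
        have h := Real.log_le_sub_one_of_pos (div_pos hx0 hM0)
        have e : x / M - 1 = (x - M) / M := by field_simp
        rw [e] at h
        have h2 : (k:ℝ) * Real.log (x / M) ≤ (k:ℝ) * ((x - M)/M) :=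
          mul_le_mul_of_nonneg_left h hk0R.le
        have h3 : (k:ℝ) * ((x - M)/M) ≤ x - M := by
          rw [mul_div_assoc', div_le_iff₀ hM0]
          nlinarith [hkM, hMx]
        linarith
      have l2 : (k:ℝ) * Real.log (M / k) ≤ (k:ℝ) * L + 1 := by
        have e : M / k = (1 + L) * (((k:ℝ) + 1) / k) := by field_simp; exact hM
        rw [e, Real.log_mul (by positivity) (by positivity)]
        have b1 : Real.log (1 + L) ≤ L := by
          have := Real.log_le_sub_one_of_pos (show (0:ℝ) < 1 + L by linarith)
          linarith
        have b2 : Real.log (((k:ℝ) + 1) / k) ≤ 1 / k := by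
          have := Real.log_le_sub_one_of_pos (show (0:ℝ) < ((k:ℝ)+1)/k by positivity)
          have e2 : ((k:ℝ) + 1) / k - 1 = 1 / k := by field_simp; ring
          linarith [e2 ▸ this]
        have : (k:ℝ) * (Real.log (1 + L) + Real.log (((k:ℝ) + 1) / k))
            ≤ (k:ℝ) * (L + 1/k) := by
          apply mul_le_mul_of_nonneg_left (by linarith) hk0R.le
        have e3 : (k:ℝ) * (L + 1/k) = (k:ℝ) * L + 1 := by field_simp
        linarith
      have lsplit : Real.log (x / kr) = Real.log (x / M) + Real.log (M / k) := by
        rw [hkr_eq, ← Real.log_mul (by positivity) (by positivity)]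
        congr 1
        field_simp
      rw [lsplit, hkr_eq, mul_add]
      nlinarith
  -- Step C
  have hsk_exp : s ^ k = Real.exp (-((k:ℝ) * Real.log (x / kr))) := by
    have hls : Real.log s = -Real.log (x / kr) := by
      rw [hs, Real.log_div (by linarith) hx0.ne', Real.log_div hx0.ne' (by linarith)]
      ring
    rw [← Real.exp_log hs0, ← Real.exp_nat_mul, hls]
    ring_nf
  have stepC : Real.exp (-(x - kr)) ≤ Real.exp (-L) * s ^ k := by
    rw [hsk_exp, ← Real.exp_add]
    apply Real.exp_le_exp.mpr
    linarith
  have hfinal : s ^ k * ∑ j ∈ Finset.range m, (T.choose j : ℝ) * (pr ^ j * (1 - pr) ^ (T - j))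
      ≤ s ^ k * Real.exp (-L) := by
    calc s ^ k * _ ≤ (s * pr + (1 - pr)) ^ T := stepA
      _ ≤ Real.exp (-(x - kr)) := stepB
      _ ≤ Real.exp (-L) * s ^ k := stepC
      _ = s ^ k * Real.exp (-L) := mul_comm _ _
  exact le_of_mul_le_mul_left hfinal (by positivity)


/-- Coupon-collector style sampling bound: if a batch of `n` i.i.d. samples from `P`
contains a point from each cluster of `F*` with probability at least `q`, then
`⌈(1 + ln(1/δ))·m/q⌉` independent batches contain, with probability at least `1 - δ`,
at least `m` sample points from each cluster of `F*`. -/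
theorem batches_hit_every_cluster
    {α : Type*} [MeasurableSpace α] [MetricSpace α]
    (P : Measure α) [IsProbabilityMeasure P]
    (Fstar : Finset α) (hFstar : Fstar.Nonempty)
    (n : ℕ) (hn : 1 ≤ n) (q : ℝ) (hq0 : 0 < q) (hq1 : q ≤ 1)
    (hbatch : ENNReal.ofReal q ≤ (Measure.pi fun _ : Fin n => P)
      {ω | ∀ f ∈ Fstar, ∃ i, ∀ f' ∈ Fstar, dist (ω i) f ≤ dist (ω i) f'})
    (m : ℕ) (hm : 1 ≤ m) (δ : ℝ) (hδ0 : 0 < δ) (hδ1 : δ < 1) :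
    1 - ENNReal.ofReal δ ≤
      (Measure.pi fun _ : Fin ⌈(1 + Real.log (1 / δ)) * m / q⌉₊ =>
          Measure.pi fun _ : Fin n => P)
        {ω | ∀ f ∈ Fstar,
          m ≤ Nat.card {bi : Fin ⌈(1 + Real.log (1 / δ)) * m / q⌉₊ × Fin n //
            ∀ f' ∈ Fstar, dist (ω bi.1 bi.2) f ≤ dist (ω bi.1 bi.2) f'}} := by
  classical
  set L : ℝ := Real.log (1 / δ) with hLdef
  have hL : 0 < L := Real.log_pos (by rw [lt_div_iff₀ hδ0]; linarith)
  set T : ℕ := ⌈(1 + L) * m / q⌉₊ with hTdef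
  set Q : Measure (Fin n → α) := Measure.pi fun _ : Fin n => P with hQdef
  haveI hQP : IsProbabilityMeasure Q := by rw [hQdef]; infer_instance
  set μT : Measure (Fin T → Fin n → α) := Measure.pi fun _ : Fin T => Q with hmuT
  haveI hμTP : IsProbabilityMeasure μT := by rw [hmuT]; infer_instance
  set G : Set (Fin n → α) :=
    {v | ∀ f ∈ Fstar, ∃ i, ∀ f' ∈ Fstar, dist (v i) f ≤ dist (v i) f'} with hGdef
  set Eset : Set (Fin T → Fin n → α) :=
    {ω | ∀ f ∈ Fstar,
      m ≤ Nat.card {bi : Fin T × Fin n //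
        ∀ f' ∈ Fstar, dist (ω bi.1 bi.2) f ≤ dist (ω bi.1 bi.2) f'}} with hEdef
  -- measurable hull of G
  set U : Set (Fin n → α) := toMeasurable Q G with hUdef
  have hU : MeasurableSet U := measurableSet_toMeasurable Q G
  have hGU : G ⊆ U := subset_toMeasurable Q G
  have hqU : ENNReal.ofReal q ≤ Q U := by
    rw [hUdef, measure_toMeasurable]; exact hbatch
  -- measurable subsets of U \ G are null
  have hD : ∀ C : Set (Fin n → α), MeasurableSet C → C ⊆ U \ G → Q C = 0 := by
    intro C hCm hCsub
    have hCU : C ⊆ U := hCsub.trans Set.diff_subset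
    have hGsub : G ⊆ U \ C := fun x hx => ⟨hGU hx, fun hxC => (hCsub hxC).2 hx⟩
    have h1 : Q U ≤ Q (U \ C) := by
      calc Q U = Q G := by rw [hUdef, measure_toMeasurable]
        _ ≤ Q (U \ C) := measure_mono hGsub
    have h2 : Q (U \ C) + Q C = Q U := by
      rw [← measure_union (disjoint_sdiff_self_left) hCm, Set.diff_union_of_subset hCU]
    have h3 : Q (U \ C) + Q C ≤ Q (U \ C) + 0 := by
      rw [h2, add_zero]; exact h1
    have := (ENNReal.add_le_add_iff_left (measure_ne_top Q (U \ C))).mp h3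
    exact le_antisymm this zero_le
  -- real probability of one batch hitting U
  set pr : ℝ := (Q U).toReal with hprdef
  have hQU_ne : Q U ≠ ⊤ := measure_ne_top _ _
  have hQU_eq : Q U = ENNReal.ofReal pr := (ENNReal.ofReal_toReal hQU_ne).symm
  have hqpr : q ≤ pr := (ENNReal.ofReal_le_iff_le_toReal hQU_ne).mp hqU
  have hpr1 : pr ≤ 1 := by
    have := prob_le_one (μ := Q) (s := U)
    calc pr = (Q U).toReal := rfl
      _ ≤ (1 : ℝ≥0∞).toReal := ENNReal.toReal_mono ENNReal.one_ne_top this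
      _ = 1 := by simp
  have hpr0 : 0 ≤ pr := ENNReal.toReal_nonneg
  have hQUc : Q Uᶜ = ENNReal.ofReal (1 - pr) := by
    rw [prob_compl_eq_one_sub hU, hQU_eq, ← ENNReal.ofReal_one,
      ← ENNReal.ofReal_sub _ hpr0]
  -- the bad (measurable) event
  set R : Finset (Fin T) → Set (Fin T → Fin n → α) :=
    fun S => Set.pi Set.univ (fun b => if b ∈ S then U else Uᶜ) with hRdef
  set Bset : Set (Fin T → Fin n → α) :=
    ⋃ j ∈ Finset.range m, ⋃ S ∈ Finset.powersetCard j (Finset.univ : Finset (Fin T)), R S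
    with hBdef
  have hBmeas : MeasurableSet Bset := by
    apply Finset.measurableSet_biUnion
    intro j _
    apply Finset.measurableSet_biUnion
    intro S _
    apply MeasurableSet.pi (Set.countable_univ)
    intro b _
    by_cases hb : b ∈ S <;> simp [hb, hU, hU.compl]
  -- outside Bset ∪ (bad coordinates), we are in Eset
  have hEc : ∀ ω, ω ∉ Bset → (∀ b, ω b ∉ U \ G) → ω ∈ Eset := by
    intro ω hB hDb
    set Sg : Finset (Fin T) := Finset.univ.filter (fun b => ω b ∈ U) with hSgdef
    have hcard : m ≤ Sg.card := by
      by_contra hlt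
      push_neg at hlt
      apply hB
      rw [hBdef]
      refine Set.mem_iUnion₂.mpr ⟨Sg.card, Finset.mem_range.mpr hlt, ?_⟩
      refine Set.mem_iUnion₂.mpr ⟨Sg, Finset.mem_powersetCard_univ.mpr rfl, ?_⟩
      intro b _
      by_cases hbU : ω b ∈ U <;> simp [hRdef, hSgdef, hbU]
    have hG' : ∀ b ∈ Sg, ω b ∈ G := by
      intro b hb
      have hbU : ω b ∈ U := (Finset.mem_filter.mp hb).2
      by_contra hg
      exact hDb b ⟨hbU, hg⟩
    intro f hf
    have hex : ∀ b : {x // x ∈ Sg}, ∃ i : Fin n,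
        ∀ f' ∈ Fstar, dist (ω b.1 i) f ≤ dist (ω b.1 i) f' :=
      fun b => (hG' b.1 b.2) f hf
    choose I hI using hex
    have hinj : Function.Injective (fun b : {x // x ∈ Sg} =>
        (⟨(b.1, I b), fun f' hf' => hI b f' hf'⟩ :
          {bi : Fin T × Fin n //
            ∀ f' ∈ Fstar, dist (ω bi.1 bi.2) f ≤ dist (ω bi.1 bi.2) f'})) := by
      intro b1 b2 h
      have : b1.1 = b2.1 := congrArg (fun z => z.1.1) h
      exact Subtype.ext this
    calc m ≤ Sg.card := hcard
      _ = Nat.card {x // x ∈ Sg} := by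
          simp [Nat.card_eq_fintype_card, Fintype.card_coe]
      _ ≤ _ := Nat.card_le_card_of_injective _ hinj
  -- per-rectangle measure
  have hRmeas : ∀ j : ℕ, ∀ S ∈ Finset.powersetCard j (Finset.univ : Finset (Fin T)),
      μT (R S) = ENNReal.ofReal (pr ^ j * (1 - pr) ^ (T - j)) := by
    intro j S hS
    have hScard : S.card = j := Finset.mem_powersetCard_univ.mp hS
    have h1pr : (0:ℝ) ≤ 1 - pr := by linarith
    rw [hRdef, hmuT, Measure.pi_pi]
    have hite : ∀ b : Fin T, Q (if b ∈ S then U else Uᶜ) = if b ∈ S then Q U else Q Uᶜ :=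
      fun b => apply_ite Q _ _ _
    simp only [hite]
    rw [← Finset.prod_mul_prod_compl S,
        Finset.prod_congr rfl (fun b hb => if_pos hb),
        Finset.prod_congr rfl (fun b (hb : b ∈ Sᶜ) => if_neg (Finset.mem_compl.mp hb)),
        Finset.prod_const, Finset.prod_const, hScard, Finset.card_compl, hScard]
    simp only [Fintype.card_fin]
    rw [hQU_eq, hQUc, ← ENNReal.ofReal_pow hpr0, ← ENNReal.ofReal_pow h1pr,
        ← ENNReal.ofReal_mul (by positivity)]
  -- Chernoff bound on Bset
  have hmu : (1 + L) * m ≤ q * T := by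
    have hceil := Nat.le_ceil ((1 + L) * m / q)
    rw [← hTdef] at hceil
    have := (div_le_iff₀ hq0).mp hceil
    linarith
  have hchern := chernoff_real q pr L T m hq0 hq1 hqpr hpr1 hL hm hmu
  have hBbound : μT Bset ≤ ENNReal.ofReal δ := by
    have h1pr : (0:ℝ) ≤ 1 - pr := by linarith
    calc μT Bset ≤ ∑ j ∈ Finset.range m,
          μT (⋃ S ∈ Finset.powersetCard j (Finset.univ : Finset (Fin T)), R S) := by
            rw [hBdef]; exact measure_biUnion_finset_le _ _
      _ ≤ ∑ j ∈ Finset.range m, ∑ S ∈ Finset.powersetCard j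
            (Finset.univ : Finset (Fin T)), μT (R S) :=
          Finset.sum_le_sum fun j _ => measure_biUnion_finset_le _ _
      _ = ∑ j ∈ Finset.range m,
            (T.choose j : ℝ≥0∞) * ENNReal.ofReal (pr ^ j * (1 - pr) ^ (T - j)) := by
          refine Finset.sum_congr rfl fun j hj => ?_
          rw [Finset.sum_congr rfl (hRmeas j), Finset.sum_const, Finset.card_powersetCard,
            Finset.card_univ, Fintype.card_fin, nsmul_eq_mul]
      _ = ENNReal.ofReal (∑ j ∈ Finset.range m,
            (T.choose j : ℝ) * (pr ^ j * (1 - pr) ^ (T - j))) := by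
          rw [ENNReal.ofReal_sum_of_nonneg (fun j _ => by positivity)]
          refine Finset.sum_congr rfl fun j hj => ?_
          rw [ENNReal.ofReal_mul (Nat.cast_nonneg _), ENNReal.ofReal_natCast]
      _ ≤ ENNReal.ofReal (Real.exp (-L)) := ENNReal.ofReal_le_ofReal hchern
      _ = ENNReal.ofReal δ := by
          congr 1
          rw [hLdef, one_div, Real.log_inv, neg_neg, Real.exp_log hδ0]
  -- assemble
  set W : Set (Fin T → Fin n → α) := toMeasurable μT Eset with hWdef
  have hWmeas : MeasurableSet W := measurableSet_toMeasurable _ _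
  have hEW : Eset ⊆ W := subset_toMeasurable _ _
  set C : Set (Fin T → Fin n → α) := Wᶜ \ Bset with hCdef
  have hCmeas : MeasurableSet C := hWmeas.compl.diff hBmeas
  have hCsub : C ⊆ ⋃ b : Fin T, {ω | ω b ∈ U \ G} := by
    intro ω hω
    rcases hω with ⟨hWc, hBc⟩
    by_contra hno
    simp only [Set.mem_iUnion, Set.mem_setOf_eq, not_exists] at hno
    exact hWc (hEW (hEc ω hBc hno))
  have hQDc : Q (U \ G)ᶜ = 1 := by
    have hVm : MeasurableSet (toMeasurable Q (U \ G)ᶜ) := measurableSet_toMeasurable _ _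
    have hVc : (toMeasurable Q (U \ G)ᶜ)ᶜ ⊆ U \ G :=
      Set.compl_subset_comm.mp (subset_toMeasurable _ _)
    have hVc0 : Q (toMeasurable Q (U \ G)ᶜ)ᶜ = 0 := hD _ hVm.compl hVc
    have hadd := measure_add_measure_compl (μ := Q) hVm
    rw [hVc0, add_zero, measure_univ] at hadd
    rw [← measure_toMeasurable ((U \ G)ᶜ)]
    exact hadd
  have hC0 : μT C = 0 := by
    have hΩ : μT (Set.pi Set.univ fun _ : Fin T => (U \ G)ᶜ) = 1 := by
      rw [hmuT, Measure.pi_pi]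
      simp [hQDc]
    have hsub : (Set.pi Set.univ fun _ : Fin T => (U \ G)ᶜ) ⊆ Cᶜ := by
      intro ω hω hC'
      rcases Set.mem_iUnion.mp (hCsub hC') with ⟨b, hb⟩
      exact (hω b (Set.mem_univ b)) hb
    have h1 : (1 : ℝ≥0∞) ≤ μT Cᶜ := hΩ ▸ measure_mono hsub
    have hCc1 : μT Cᶜ = 1 := le_antisymm prob_le_one h1
    have hadd := measure_add_measure_compl (μ := μT) hCmeas
    rw [hCc1, measure_univ] at hadd
    have h2 : μT C + 1 = 0 + 1 := by rw [hadd, zero_add]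
    exact (ENNReal.add_left_inj ENNReal.one_ne_top).mp h2
  have hWc_le : μT Wᶜ ≤ ENNReal.ofReal δ := by
    have hsplit : Wᶜ ⊆ Bset ∪ C := by
      intro ω hω
      by_cases hB : ω ∈ Bset
      · exact Or.inl hB
      · exact Or.inr ⟨hω, hB⟩
    calc μT Wᶜ ≤ μT (Bset ∪ C) := measure_mono hsplit
      _ ≤ μT Bset + μT C := measure_union_le _ _
      _ = μT Bset := by rw [hC0, add_zero]
      _ ≤ ENNReal.ofReal δ := hBbound
  have hWeq : μT W = 1 - μT Wᶜ := by
    have h := prob_compl_eq_one_sub (μ := μT) hWmeas.compl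
    rw [compl_compl] at h
    exact h
  calc 1 - ENNReal.ofReal δ ≤ 1 - μT Wᶜ := tsub_le_tsub_left hWc_le 1
    _ = μT W := hWeq.symm
    _ = μT Eset := measure_toMeasurable _
end
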